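/- arXiv:2108.10119 — 4 statements merged into one kernel-verified Lean document; each statement's English description precedes it below -/
import Mathlib

section
/- Let (Ω, μ) be a probability space, let ψ : Ω → ℝ be a nonnegative integrable random variable, and let a ≥ 0 be a real constant (the image-leakage ratio ILR). Set J = ∫ ψ dμ. Then the ergodic capacity satisfies ∫ (1/2)·logb 2 (1 + ψ(ω)/(a·ψ(ω) + 1)) dμ(ω) ≤ (1/2)·logb 2 (1 + J/(a·J + 1)). -/
open MeasureTheory

/-- Tangent-line inequality for the concave function `x ↦ log (1 + x/(a x + 1))`. -/
lemma tangent_key (a J x : ℝ) (ha : 0 ≤ a) (hJ : 0 ≤ J) (hx : 0 ≤ x) :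
    Real.log (1 + x / (a * x + 1)) ≤
      Real.log (1 + J / (a * J + 1)) + (x - J) / (((a+1)*J+1) * (a*J+1)) := by
  have h1 : (0:ℝ) < a * x + 1 := by positivity
  have h2 : (0:ℝ) < a * J + 1 := by positivity
  have h3 : (0:ℝ) < (a+1) * x + 1 := by nlinarith
  have h4 : (0:ℝ) < (a+1) * J + 1 := by nlinarith
  have e1 : 1 + x / (a * x + 1) = ((a+1)*x+1) / (a*x+1) := by field_simp; ring
  have e2 : 1 + J / (a * J + 1) = ((a+1)*J+1) / (a*J+1) := by field_simp; ring
  rw [e1, e2, Real.log_div h3.ne' h1.ne', Real.log_div h4.ne' h2.ne']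
  have hlog := Real.log_le_sub_one_of_pos
    (show 0 < (((a+1)*x+1) * (a*J+1)) / (((a+1)*J+1) * (a*x+1)) by positivity)
  rw [Real.log_div (by positivity) (by positivity), Real.log_mul h3.ne' h2.ne',
    Real.log_mul h4.ne' h1.ne'] at hlog
  have h6 : (((a+1)*x+1) * (a*J+1)) / (((a+1)*J+1) * (a*x+1)) - 1 ≤
      (x - J) / (((a+1)*J+1) * (a*J+1)) := by
    rw [div_sub_one (by positivity), div_le_div_iff₀ (by positivity) (by positivity)]
    nlinarith [mul_nonneg (mul_nonneg ha h4.le) (sq_nonneg (x - J)), sq_nonneg (x-J)]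
  linarith

/-- Theorem 1 (upper bound on the ergodic capacity): for a nonnegative integrable
SNR random variable `ψ` and image-leakage ratio `a ≥ 0`, the ergodic capacity
`∫ (1/2)·log₂(1 + ψ/(a·ψ+1))` is bounded by `(1/2)·log₂(1 + J/(a·J+1))` with `J = ∫ ψ`. -/
theorem ergodic_capacity_upper_bound {Ω : Type*} [MeasurableSpace Ω]
    (μ : Measure Ω) [IsProbabilityMeasure μ]
    (ψ : Ω → ℝ) (hψ0 : ∀ ω, 0 ≤ ψ ω) (hψint : Integrable ψ μ)
    (a : ℝ) (ha : 0 ≤ a) :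
    ∫ ω, (1 / 2) * Real.logb 2 (1 + ψ ω / (a * ψ ω + 1)) ∂μ ≤
      (1 / 2) * Real.logb 2 (1 + (∫ ω, ψ ω ∂μ) / (a * (∫ ω, ψ ω ∂μ) + 1)) := by
  set J : ℝ := ∫ ω, ψ ω ∂μ with hJdef
  have hJ : 0 ≤ J := integral_nonneg hψ0
  set D : ℝ := ((a+1)*J+1) * (a*J+1) with hDdef
  have hD : 0 < D := by positivity
  -- measurability of the integrand (before the log and after)
  have hmeas : AEStronglyMeasurable (fun ω => Real.log (1 + ψ ω / (a * ψ ω + 1))) μ := by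
    have : Measurable fun x : ℝ => Real.log (1 + x / (a * x + 1)) := by
      apply Real.measurable_log.comp
      exact (measurable_const.add (measurable_id.div ((measurable_const.mul measurable_id).add measurable_const)))
    exact (this.comp_aemeasurable hψint.aemeasurable).aestronglyMeasurable
  -- pointwise nonnegativity and linear bound
  have hfb : ∀ ω, 0 ≤ Real.log (1 + ψ ω / (a * ψ ω + 1)) ∧
      Real.log (1 + ψ ω / (a * ψ ω + 1)) ≤ ψ ω := by
    intro ω
    have hψω : 0 ≤ ψ ω := hψ0 ω
    have h1 : (0:ℝ) < a * ψ ω + 1 := by positivity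
    have ht0 : 0 ≤ ψ ω / (a * ψ ω + 1) := div_nonneg (hψ0 ω) h1.le
    constructor
    · exact Real.log_nonneg (by linarith)
    · have h2 : Real.log (1 + ψ ω / (a * ψ ω + 1)) ≤ ψ ω / (a * ψ ω + 1) := by
        have := Real.log_le_sub_one_of_pos (show (0:ℝ) < 1 + ψ ω / (a * ψ ω + 1) by linarith)
        linarith
      have h3 : ψ ω / (a * ψ ω + 1) ≤ ψ ω := by
        rw [div_le_iff₀ h1]
        nlinarith [mul_nonneg ha (mul_nonneg (hψ0 ω) (hψ0 ω))]
      linarith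
  have hint1 : Integrable (fun ω => Real.log (1 + ψ ω / (a * ψ ω + 1))) μ := by
    refine hψint.mono hmeas ?_
    filter_upwards with ω
    rw [Real.norm_eq_abs, Real.norm_eq_abs, abs_of_nonneg (hfb ω).1, abs_of_nonneg (hψ0 ω)]
    exact (hfb ω).2
  have hint2 : Integrable (fun ω => Real.log (1 + J / (a * J + 1)) + (ψ ω - J) / D) μ :=
    (integrable_const _).add ((hψint.sub (integrable_const J)).div_const D)
  have hmono : ∫ ω, Real.log (1 + ψ ω / (a * ψ ω + 1)) ∂μ ≤
      ∫ ω, (Real.log (1 + J / (a * J + 1)) + (ψ ω - J) / D) ∂μ :=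
    integral_mono hint1 hint2 (fun ω => tangent_key a J (ψ ω) ha hJ (hψ0 ω))
  have hintlin : Integrable (fun ω => (ψ ω - J) / D) μ := by
    exact (hψint.sub (integrable_const J)).div_const D
  have hrhs : ∫ ω, (Real.log (1 + J / (a * J + 1)) + (ψ ω - J) / D) ∂μ =
      Real.log (1 + J / (a * J + 1)) := by
    rw [integral_add (integrable_const _) hintlin,
      integral_const, integral_div, integral_sub hψint (integrable_const J), integral_const]
    simp [hJdef]
  rw [hrhs] at hmono
  -- convert logb to log
  have hlog2 : (0:ℝ) < Real.log 2 := Real.log_pos (by norm_num)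
  have hrw : ∀ t : ℝ, (1/2 : ℝ) * Real.logb 2 t = Real.log t * (1 / (2 * Real.log 2)) := by
    intro t
    rw [Real.logb, div_eq_mul_inv]
    field_simp
    try ring
  simp only [hrw]
  rw [integral_mul_const]
  apply mul_le_mul_of_nonneg_right hmono
  positivity
end

section
/- Let N, m be natural numbers with 1 ≤ m ≤ N, let γ̄₁ > 0 and 0 ≤ ρ ≤ 1 be real constants, and define f : ℝ → ℝ by f(x) = m·(N choose m)·∑_{n=0}^{m−1} (−1)ⁿ·((m−1) choose n)·(1/(((N−m+n)·(1−ρ)+1)·γ̄₁))·exp(−(N−m+n+1)·x/(((N−m+n)·(1−ρ)+1)·γ̄₁)). Then ∫_{0}^{∞} f(x) dx = 1. -/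
open MeasureTheory Set

lemma prs_key_sum (k : ℕ) : ∀ a : ℕ,
    ∑ n ∈ Finset.range (k+1), (-1:ℝ)^n * (k.choose n) / ((a:ℝ) + n + 1)
      = (a.factorial * k.factorial : ℝ) / ((a+k+1).factorial : ℝ) := by
  induction k with
  | zero =>
    intro a
    have h : ((a+1).factorial : ℝ) = (a+1) * a.factorial := by
      rw [Nat.factorial_succ]; push_cast; ring
    simp only [zero_add, Finset.sum_range_one, Nat.choose_zero_right, Nat.factorial_zero, Nat.cast_zero, add_zero]
    rw [h]
    have ha : (0:ℝ) < (a:ℝ) + 1 := by positivity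
    have hf : (0:ℝ) < (a.factorial : ℝ) := by exact_mod_cast a.factorial_pos
    field_simp
  | succ k ih =>
    intro a
    have hsplit : ∑ n ∈ Finset.range (k+2), (-1:ℝ)^n * ((k+1).choose n) / ((a:ℝ) + n + 1)
        = (∑ n ∈ Finset.range (k+1), (-1:ℝ)^n * (k.choose n) / ((a:ℝ) + n + 1))
          - ∑ n ∈ Finset.range (k+1), (-1:ℝ)^n * (k.choose n) / (((a:ℝ)+1) + n + 1) := by
      rw [Finset.sum_range_succ' (fun n => (-1:ℝ)^n * ((k+1).choose n) / ((a:ℝ) + n + 1)),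
        Finset.sum_range_succ' (fun n => (-1:ℝ)^n * (k.choose n) / ((a:ℝ) + n + 1))]
      push_cast
      have hterm : ∀ j, (-1:ℝ)^(j+1) * ((k+1).choose (j+1)) / ((a:ℝ) + (j+1) + 1)
          = (-1:ℝ)^(j+1) * (k.choose (j+1)) / ((a:ℝ) + (j+1) + 1)
            - (-1:ℝ)^j * (k.choose j) / (((a:ℝ)+1) + j + 1) := by
        intro j
        rw [Nat.choose_succ_succ]
        push_cast
        ring
      rw [Finset.sum_congr rfl (fun j _ => hterm j), Finset.sum_sub_distrib]
      have hlast : (∑ j ∈ Finset.range (k+1), (-1:ℝ)^(j+1) * (k.choose (j+1)) / ((a:ℝ) + (j+1) + 1))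
          = ∑ j ∈ Finset.range k, (-1:ℝ)^(j+1) * (k.choose (j+1)) / ((a:ℝ) + (j+1) + 1) := by
        rw [Finset.sum_range_succ, Nat.choose_succ_self]
        simp
      rw [hlast]
      simp only [pow_zero, Nat.choose_zero_right, Nat.cast_one, Nat.cast_zero]
      ring
    have ihb := ih (a+1)
    push_cast at ihb
    rw [hsplit, ih a, ihb]
    have e1 : ((a + (k+1) + 1).factorial : ℝ) = ((a:ℝ)+k+2) * ((a+k+1).factorial) := by
      have : a + (k+1) + 1 = (a+k+1) + 1 := by ring
      rw [this, Nat.factorial_succ]; push_cast; ring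
    have e2 : (((a+1) + k + 1).factorial : ℝ) = ((a:ℝ)+k+2) * ((a+k+1).factorial) := by
      have : (a+1) + k + 1 = (a+k+1) + 1 := by ring
      rw [this, Nat.factorial_succ]; push_cast; ring
    have e3 : ((a+1).factorial : ℝ) = ((a:ℝ)+1) * a.factorial := by
      rw [Nat.factorial_succ]; push_cast; ring
    have e4 : ((k+1).factorial : ℝ) = ((k:ℝ)+1) * k.factorial := by
      rw [Nat.factorial_succ]; push_cast; ring
    rw [e1, e2, e3, e4]
    have h1 : (0:ℝ) < ((a+k+1).factorial : ℝ) := by exact_mod_cast (a+k+1).factorial_pos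
    have h2 : (0:ℝ) < (a:ℝ)+k+2 := by positivity
    field_simp
    ring

lemma prs_integral_exp (c : ℝ) (hc : 0 < c) :
    ∫ x in Ioi (0:ℝ), Real.exp (-c * x) = c⁻¹ := by
  have h := integral_comp_mul_left_Ioi (fun y => Real.exp (-y)) 0 hc
  simp only [mul_zero, neg_mul] at h ⊢
  rw [show (fun x : ℝ => Real.exp (-(c * x))) = (fun x => (fun y => Real.exp (-y)) (c * x)) from rfl] at *
  rw [h, integral_exp_neg_Ioi_zero, smul_eq_mul, mul_one]

/-- The PDF of the first-hop SNR under partial relay selection with outdated CSI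
(Eq. (14)) integrates to one over `[0, ∞)`. -/
theorem prs_pdf_integrates_to_one (N m : ℕ) (h1 : 1 ≤ m) (h2 : m ≤ N)
    (γ1 ρ : ℝ) (hγ : 0 < γ1) (hρ0 : 0 ≤ ρ) (hρ1 : ρ ≤ 1) :
    ∫ x in Set.Ioi (0 : ℝ),
      (m : ℝ) * (N.choose m) *
        ∑ n ∈ Finset.range m,
          (-1 : ℝ) ^ n * ((m - 1).choose n) *
            (1 / ((((N : ℝ) - m + n) * (1 - ρ) + 1) * γ1)) *
            Real.exp (-(((N : ℝ) - m + n + 1) * x) /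
              ((((N : ℝ) - m + n) * (1 - ρ) + 1) * γ1)) = 1 := by
  set A : ℕ → ℝ := fun n => (((N : ℝ) - m + n) * (1 - ρ) + 1) * γ1 with hAdef
  set B : ℕ → ℝ := fun n => (N : ℝ) - m + n + 1 with hBdef
  have hNm : (0:ℝ) ≤ (N:ℝ) - m := by
    have := (Nat.cast_le (α := ℝ)).2 h2
    linarith
  have hA : ∀ n : ℕ, 0 < A n := by
    intro n
    have h0 : (0:ℝ) ≤ ((N:ℝ) - m + n) := by positivity
    have h1ρ : (0:ℝ) ≤ 1 - ρ := by linarith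
    have : (0:ℝ) ≤ ((N:ℝ) - m + n) * (1 - ρ) := mul_nonneg h0 h1ρ
    simp only [hAdef]
    nlinarith
  have hB : ∀ n : ℕ, 0 < B n := by
    intro n
    simp only [hBdef]
    positivity
  -- rewrite integrand
  have hfun : ∀ x : ℝ,
      (m : ℝ) * (N.choose m) *
        ∑ n ∈ Finset.range m,
          (-1 : ℝ) ^ n * ((m - 1).choose n) *
            (1 / ((((N : ℝ) - m + n) * (1 - ρ) + 1) * γ1)) *
            Real.exp (-(((N : ℝ) - m + n + 1) * x) /
              ((((N : ℝ) - m + n) * (1 - ρ) + 1) * γ1))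
      = ∑ n ∈ Finset.range m,
          ((m : ℝ) * (N.choose m) * ((-1 : ℝ) ^ n * ((m - 1).choose n) / A n)) *
            Real.exp (-(B n / A n) * x) := by
    intro x
    rw [Finset.mul_sum]
    refine Finset.sum_congr rfl fun n _ => ?_
    have : -(B n * x) / A n = -(B n / A n) * x := by
      field_simp
    simp only [hAdef, hBdef] at this ⊢
    rw [← this]
    ring_nf
  rw [integral_congr_ae (Filter.Eventually.of_forall fun x => hfun x)]
  have hint : ∀ n ∈ Finset.range m, IntegrableOn
      (fun x : ℝ => ((m : ℝ) * (N.choose m) * ((-1 : ℝ) ^ n * ((m - 1).choose n) / A n)) *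
        Real.exp (-(B n / A n) * x)) (Ioi 0) := by
    intro n _
    exact (exp_neg_integrableOn_Ioi 0 (div_pos (hB n) (hA n))).const_mul _
  rw [integral_finset_sum _ hint]
  have heval : ∀ n ∈ Finset.range m,
      ∫ x in Ioi (0:ℝ), ((m : ℝ) * (N.choose m) * ((-1 : ℝ) ^ n * ((m - 1).choose n) / A n)) *
        Real.exp (-(B n / A n) * x)
      = (m : ℝ) * (N.choose m) * ((-1 : ℝ) ^ n * ((m - 1).choose n) / B n) := by
    intro n _
    rw [integral_const_mul, prs_integral_exp _ (div_pos (hB n) (hA n)), inv_div]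
    have key : ∀ c : ℝ, c / A n * (A n / B n) = c / B n := by
      intro c
      rw [div_mul_div_comm, mul_comm c (A n), mul_div_mul_left _ _ (hA n).ne']
    rw [mul_assoc, key]
  rw [Finset.sum_congr rfl heval, ← Finset.mul_sum]
  -- now the combinatorial identity
  obtain ⟨k, rfl⟩ : ∃ k, m = k + 1 := ⟨m - 1, (Nat.succ_pred_eq_of_pos h1).symm⟩
  have hcast : ∀ n : ℕ, B n = ((N - (k+1) : ℕ) : ℝ) + n + 1 := by
    intro n
    simp only [hBdef]
    rw [Nat.cast_sub h2]
  have hsum : ∑ n ∈ Finset.range (k+1), (-1 : ℝ) ^ n * (((k+1) - 1).choose n) / B n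
      = ((N - (k+1)).factorial * k.factorial : ℝ) / (((N - (k+1)) + k + 1).factorial : ℝ) := by
    rw [← prs_key_sum k (N - (k+1))]
    refine Finset.sum_congr rfl fun n _ => ?_
    rw [hcast n]
    norm_num
  have hNfact : (N - (k+1)) + k + 1 = N := by omega
  rw [hsum, hNfact]
  -- m * C(N,m) * ((N-m)! * (m-1)!) / N! = 1
  have hch := Nat.choose_mul_factorial_mul_factorial h2
  have hchR : ((N.choose (k+1)) : ℝ) * ((k+1).factorial) * ((N - (k+1)).factorial) = N.factorial := by
    exact_mod_cast congrArg (Nat.cast (R := ℝ)) hch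
  have hfs : ((k+1).factorial : ℝ) = ((k:ℝ)+1) * k.factorial := by
    rw [Nat.factorial_succ]; push_cast; ring
  have hNf : (0:ℝ) < (N.factorial : ℝ) := by exact_mod_cast N.factorial_pos
  have hkf : (0:ℝ) < (k.factorial : ℝ) := by exact_mod_cast k.factorial_pos
  have hmf : (0:ℝ) < ((N - (k+1)).factorial : ℝ) := by exact_mod_cast (N - (k+1)).factorial_pos
  rw [hfs] at hchR
  push_cast
  field_simp
  nlinarith [hchR]
end

section
/- Let σ > 0 and A > 0 be real constants, and set x = A²/σ². Then ∫_{0}^{∞} r · (A²·r/(A² + r²)) · (2·r/σ²) · exp(−r²/σ²) dr = A² · (1 − x · exp(x) · ∫_{x}^{∞} (exp(−t)/t) dt). -/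
open MeasureTheory Set Real

lemma twta_shift (x : ℝ) (f : ℝ → ℝ) :
    ∫ t in Ioi x, f t = ∫ u in Ioi (0:ℝ), f (u + x) := by
  rw [← integral_indicator measurableSet_Ioi, ← integral_indicator measurableSet_Ioi,
    ← integral_add_right_eq_self (Set.indicator (Ioi x) f) x]
  congr 1
  ext u
  by_cases h : 0 < u
  · simp [Set.indicator, h, lt_add_iff_pos_left]
  · simp [Set.indicator, h, lt_add_iff_pos_left]

lemma twta_integrable (x : ℝ) (hx : 0 < x) :
    IntegrableOn (fun u => Real.exp (-u) / (x + u)) (Ioi 0) := by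
  have hexp : IntegrableOn (fun u : ℝ => Real.exp (-u)) (Ioi 0) := by
    simpa using exp_neg_integrableOn_Ioi 0 one_pos
  refine Integrable.mono (hexp.const_mul x⁻¹) ?_ ?_
  · refine (ContinuousOn.aestronglyMeasurable ?_ measurableSet_Ioi)
    exact (Real.continuous_exp.comp continuous_neg).continuousOn.div
      (continuous_const.add continuous_id).continuousOn
      (fun u hu => by have : (0:ℝ) < u := hu; positivity)
  · filter_upwards [ae_restrict_mem measurableSet_Ioi] with u hu
    have hu : (0:ℝ) < u := hu
    rw [Real.norm_eq_abs, Real.norm_eq_abs, abs_of_nonneg (by positivity),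
      abs_of_nonneg (by positivity)]
    rw [div_le_iff₀ (by positivity)]
    have h1 : x ≤ x + u := by linarith
    calc Real.exp (-u) = x⁻¹ * Real.exp (-u) * x := by field_simp
    _ ≤ x⁻¹ * Real.exp (-u) * (x + u) :=
        mul_le_mul_of_nonneg_left h1 (by positivity)

/-- Cross-correlation of the TWTA output with its Rayleigh input (Bussgang linear
gain of the TWTA model, Eq. (8)), with `x = A²/σ²`:
`∫₀^∞ r·(A²r/(A²+r²))·(2r/σ²)·e^{−r²/σ²} dr = A²·(1 − x·eˣ·∫ₓ^∞ e^{−t}/t dt)`. -/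
theorem twta_cross_correlation (σ A : ℝ) (hσ : 0 < σ) (hA : 0 < A) :
    ∫ r in Set.Ioi (0 : ℝ),
      r * (A ^ 2 * r / (A ^ 2 + r ^ 2)) * (2 * r / σ ^ 2) * Real.exp (-r ^ 2 / σ ^ 2) =
      A ^ 2 * (1 - (A ^ 2 / σ ^ 2) * Real.exp (A ^ 2 / σ ^ 2) *
        ∫ t in Set.Ioi (A ^ 2 / σ ^ 2), Real.exp (-t) / t) := by
  set x : ℝ := A ^ 2 / σ ^ 2 with hxdef
  have hσ2 : (0:ℝ) < σ ^ 2 := by positivity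
  have hx : 0 < x := by positivity
  set F : ℝ → ℝ := fun y => A ^ 2 * y / (A ^ 2 + y) * (σ ^ 2)⁻¹ * Real.exp (-y / σ ^ 2)
    with hF
  -- Step 1: rewrite the integrand as (2 * r ^ ((2:ℝ)-1)) • F (r ^ (2:ℝ))
  have step1 : ∫ r in Ioi (0:ℝ),
      r * (A ^ 2 * r / (A ^ 2 + r ^ 2)) * (2 * r / σ ^ 2) * Real.exp (-r ^ 2 / σ ^ 2)
      = ∫ r in Ioi (0:ℝ), ((2:ℝ) * r ^ ((2:ℝ) - 1)) • F (r ^ (2:ℝ)) := by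
    refine setIntegral_congr_fun measurableSet_Ioi fun r hr => ?_
    have hr : (0:ℝ) < r := hr
    have h2 : r ^ ((2:ℝ)) = r ^ 2 := by
      rw [show ((2:ℝ)) = ((2:ℕ):ℝ) by norm_num, Real.rpow_natCast]
    have h1 : r ^ ((2:ℝ) - 1) = r := by
      norm_num
    rw [h2, h1, smul_eq_mul, hF]
    have hden : (0:ℝ) < A ^ 2 + r ^ 2 := by positivity
    field_simp
  -- Step 2: substitution y = r^2
  have step2 : ∫ r in Ioi (0:ℝ), ((2:ℝ) * r ^ ((2:ℝ) - 1)) • F (r ^ (2:ℝ))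
      = ∫ y in Ioi (0:ℝ), F y :=
    integral_comp_rpow_Ioi_of_pos (g := F) (p := 2) two_pos
  -- Step 3: scaling y = σ^2 * u
  have step3 : ∫ u in Ioi (0:ℝ), F (σ ^ 2 * u) = (σ ^ 2)⁻¹ • ∫ y in Ioi (0:ℝ), F y := by
    simpa using integral_comp_mul_left_Ioi F 0 hσ2
  have step3' : ∫ y in Ioi (0:ℝ), F y = σ ^ 2 * ∫ u in Ioi (0:ℝ), F (σ ^ 2 * u) := by
    rw [step3, smul_eq_mul]; field_simp
  -- F (σ^2 * u) = (σ^2)⁻¹ * (A^2 * (exp (-u) - x * (exp (-u) / (x + u))))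
  have hFval : ∀ u ∈ Ioi (0:ℝ), F (σ ^ 2 * u)
      = (σ ^ 2)⁻¹ * (A ^ 2 * (Real.exp (-u) - x * (Real.exp (-u) / (x + u)))) := by
    intro u hu
    have hu : (0:ℝ) < u := hu
    have hd : (0:ℝ) < A ^ 2 + σ ^ 2 * u := by positivity
    have hxu : (0:ℝ) < x + u := by positivity
    have hexp : -(σ ^ 2 * u) / σ ^ 2 = -u := by
      rw [neg_div, mul_div_cancel_left₀ _ hσ2.ne']
    show A ^ 2 * (σ ^ 2 * u) / (A ^ 2 + σ ^ 2 * u) * (σ ^ 2)⁻¹ *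
        Real.exp (-(σ ^ 2 * u) / σ ^ 2)
      = (σ ^ 2)⁻¹ * (A ^ 2 * (Real.exp (-u) - x * (Real.exp (-u) / (x + u))))
    rw [hexp, hxdef]
    field_simp
    ring
  have step4 : ∫ u in Ioi (0:ℝ), F (σ ^ 2 * u)
      = (σ ^ 2)⁻¹ * (A ^ 2 * (1 - x * ∫ u in Ioi (0:ℝ), Real.exp (-u) / (x + u))) := by
    rw [setIntegral_congr_fun measurableSet_Ioi hFval]
    have hexp : IntegrableOn (fun u : ℝ => Real.exp (-u)) (Ioi 0) := by
      simpa using exp_neg_integrableOn_Ioi 0 one_pos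
    have hint := twta_integrable x hx
    rw [integral_const_mul, integral_const_mul,
      integral_sub hexp (hint.const_mul x), integral_exp_neg_Ioi_zero, integral_const_mul]
  -- Step 5: shift for the RHS integral
  have step5 : ∫ t in Ioi x, Real.exp (-t) / t
      = Real.exp (-x) * ∫ u in Ioi (0:ℝ), Real.exp (-u) / (x + u) := by
    rw [twta_shift x (fun t => Real.exp (-t) / t), ← integral_const_mul]
    refine setIntegral_congr_fun measurableSet_Ioi fun u hu => ?_
    have hu : (0:ℝ) < u := hu
    rw [show -(u + x) = -x + -u by ring, Real.exp_add]
    rw [show x + u = u + x by ring]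
    ring
  rw [step1, step2, step3', step4, step5]
  rw [mul_assoc x, ← mul_assoc (Real.exp x), ← Real.exp_add, add_neg_cancel,
    Real.exp_zero, one_mul, ← mul_assoc, mul_inv_cancel₀ hσ2.ne', one_mul]
end

section
/- Let σ > 0 and A > 0 be real constants, and set x = A²/σ². Then ∫_{0}^{∞} (A²·r/(A² + r²))² · (2·r/σ²) · exp(−r²/σ²) dr = (A⁴/σ²) · ((1 + x) · exp(x) · ∫_{x}^{∞} (exp(−t)/t) dt − 1). -/
open MeasureTheory Real Set Filter Topology

private lemma aux_integrable_bound (c : ℝ) {h : ℝ → ℝ}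
    (hcont : ContinuousOn h (Ioi 0))
    (hbd : ∀ u ∈ Ioi (0:ℝ), ‖h u‖ ≤ c * Real.exp (-u)) :
    IntegrableOn h (Ioi 0) := by
  have hg : IntegrableOn (fun u : ℝ => c * Real.exp (-u)) (Ioi 0) := by
    have := (exp_neg_integrableOn_Ioi (0:ℝ) (b := 1) one_pos).const_mul c
    simpa [IntegrableOn] using this
  refine hg.integrable.mono' (hcont.aestronglyMeasurable measurableSet_Ioi) ?_
  filter_upwards [ae_restrict_mem measurableSet_Ioi] with u hu using hbd u hu

/-- Second moment of the TWTA output over a Rayleigh envelope (TWTA clipping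
factor, Eq. (9)), with `x = A²/σ²`:
`∫₀^∞ (A²r/(A²+r²))²·(2r/σ²)·e^{−r²/σ²} dr = (A⁴/σ²)·((1+x)·eˣ·∫ₓ^∞ e^{−t}/t dt − 1)`. -/
theorem twta_second_moment (σ A : ℝ) (hσ : 0 < σ) (hA : 0 < A) :
    ∫ r in Set.Ioi (0 : ℝ),
      (A ^ 2 * r / (A ^ 2 + r ^ 2)) ^ 2 * (2 * r / σ ^ 2) * Real.exp (-r ^ 2 / σ ^ 2) =
      (A ^ 4 / σ ^ 2) * ((1 + A ^ 2 / σ ^ 2) * Real.exp (A ^ 2 / σ ^ 2) *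
        (∫ t in Set.Ioi (A ^ 2 / σ ^ 2), Real.exp (-t) / t) - 1) := by
  set x : ℝ := A ^ 2 / σ ^ 2 with hxdef
  have hσ2 : (0:ℝ) < σ ^ 2 := pow_pos hσ 2
  have hx : 0 < x := div_pos (pow_pos hA 2) hσ2
  set E : ℝ := ∫ u in Ioi (0:ℝ), Real.exp (-u) / (x + u) with hEdef
  -- integrability facts
  have hxu : ∀ u ∈ Ioi (0:ℝ), (0:ℝ) < x + u := fun u hu => add_pos hx hu
  have hint2 : IntegrableOn (fun u => Real.exp (-u) / (x + u)) (Ioi 0) := by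
    refine aux_integrable_bound x⁻¹ ?_ ?_
    · exact (Real.continuous_exp.comp continuous_neg).continuousOn.div
        (continuous_const.add continuous_id).continuousOn
        (fun u hu => (hxu u hu).ne')
    · intro u hu
      have h1 : (0:ℝ) < x + u := hxu u hu
      rw [Real.norm_eq_abs, abs_of_nonneg (by positivity)]
      rw [div_le_iff₀ h1, inv_mul_eq_div, div_mul_eq_mul_div, le_div_iff₀ hx]
      have : x ≤ x + u := by linarith [hu.out]
      nlinarith [Real.exp_pos (-u)]
  have hint2' : IntegrableOn (fun u => Real.exp (-u) / (x + u) ^ 2) (Ioi 0) := by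
    refine aux_integrable_bound (x^2)⁻¹ ?_ ?_
    · exact (Real.continuous_exp.comp continuous_neg).continuousOn.div
        ((continuous_const.add continuous_id).pow 2).continuousOn
        (fun u hu => pow_ne_zero 2 (hxu u hu).ne')
    · intro u hu
      have h1 : (0:ℝ) < x + u := hxu u hu
      rw [Real.norm_eq_abs, abs_of_nonneg (by positivity)]
      rw [div_le_iff₀ (by positivity), inv_mul_eq_div, div_mul_eq_mul_div,
        le_div_iff₀ (by positivity : (0:ℝ) < x ^ 2)]
      have hxx : x ^ 2 ≤ (x + u) ^ 2 := by nlinarith [hu.out]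
      nlinarith [Real.exp_pos (-u), mul_le_mul_of_nonneg_left hxx (Real.exp_pos (-u)).le]
  have hint1 : IntegrableOn (fun u => u * Real.exp (-u) / (x + u) ^ 2) (Ioi 0) := by
    refine aux_integrable_bound x⁻¹ ?_ ?_
    · exact ((continuous_id.mul (Real.continuous_exp.comp continuous_neg)).continuousOn).div
        ((continuous_const.add continuous_id).pow 2).continuousOn
        (fun u hu => pow_ne_zero 2 (hxu u hu).ne')
    · intro u hu
      have h1 : (0:ℝ) < x + u := hxu u hu
      have hu0 : (0:ℝ) < u := hu
      rw [Real.norm_eq_abs, abs_of_nonneg (by positivity)]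
      rw [div_le_iff₀ (by positivity), inv_mul_eq_div, div_mul_eq_mul_div, le_div_iff₀ hx]
      have hb : u * x ≤ (x + u) ^ 2 := by nlinarith
      nlinarith [mul_le_mul_of_nonneg_left hb (Real.exp_pos (-u)).le]
  -- FTC: antiderivative F u = x * exp (-u) / (x + u)
  have hderiv : ∀ u ∈ Ici (0:ℝ),
      HasDerivAt (fun u => x * Real.exp (-u) / (x + u))
        (-(x * Real.exp (-u) / (x + u) ^ 2) - x * Real.exp (-u) / (x + u)) u := by
    intro u hu
    have h1 : (0:ℝ) < x + u := by have := hu.out; positivity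
    have hexp : HasDerivAt (fun u : ℝ => Real.exp (-u)) (-Real.exp (-u)) u := by
      simpa [Function.comp_def] using ((Real.hasDerivAt_exp (-u)).comp u (hasDerivAt_neg u))
    have hinv : HasDerivAt (fun u : ℝ => (x + u)⁻¹) (-1 / (x + u) ^ 2) u := by
      have : HasDerivAt (fun u : ℝ => x + u) 1 u := (hasDerivAt_id u).const_add x
      exact this.inv h1.ne'
    have := ((hexp.mul hinv).const_mul x)
    rw [show (fun u => x * Real.exp (-u) / (x + u)) =
        (fun y => x * ((fun u => Real.exp (-u)) * fun u => (x + u)⁻¹) y) by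
      funext v; simp [div_eq_mul_inv, mul_assoc]]
    refine this.congr_deriv ?_
    field_simp
    ring
  have htend : Tendsto (fun u => x * Real.exp (-u) / (x + u)) atTop (𝓝 0) := by
    have h1 : Tendsto (fun u : ℝ => (x + u)⁻¹) atTop (𝓝 0) :=
      tendsto_inv_atTop_zero.comp (tendsto_atTop_add_const_left atTop x tendsto_id)
    have := (Real.tendsto_exp_neg_atTop_nhds_zero.mul h1).const_mul x
    simpa [div_eq_mul_inv, mul_assoc] using this
  have hintd : IntegrableOn (fun u =>
      -(x * Real.exp (-u) / (x + u) ^ 2) - x * Real.exp (-u) / (x + u)) (Ioi 0) := by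
    have h1 := (hint2'.const_mul x).neg
    have h2 := hint2.const_mul x
    refine (h1.sub h2).congr ?_
    filter_upwards with u
    simp [mul_div_assoc]
  have hFTC : ∫ u in Ioi (0:ℝ),
      (-(x * Real.exp (-u) / (x + u) ^ 2) - x * Real.exp (-u) / (x + u)) =
      0 - x * Real.exp (-(0:ℝ)) / (x + 0) := by
    exact integral_Ioi_of_hasDerivAt_of_tendsto' hderiv hintd htend
  have hFTC' : ∫ u in Ioi (0:ℝ),
      (-(x * Real.exp (-u) / (x + u) ^ 2) - x * Real.exp (-u) / (x + u)) = -1 := by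
    rw [hFTC]
    field_simp
    simp
  -- key : ∫ u e^{-u}/(x+u)^2 = (1+x) E - 1
  have hkey : ∫ u in Ioi (0:ℝ), u * Real.exp (-u) / (x + u) ^ 2 = (1 + x) * E - 1 := by
    have hsplit : ∫ u in Ioi (0:ℝ),
        (u * Real.exp (-u) / (x + u) ^ 2 - (1 + x) * (Real.exp (-u) / (x + u))) =
        (∫ u in Ioi (0:ℝ), u * Real.exp (-u) / (x + u) ^ 2) - (1 + x) * E := by
      rw [integral_sub hint1 (hint2.const_mul (1 + x)), integral_const_mul]
    have hcongr : ∫ u in Ioi (0:ℝ),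
        (u * Real.exp (-u) / (x + u) ^ 2 - (1 + x) * (Real.exp (-u) / (x + u))) =
        ∫ u in Ioi (0:ℝ),
        (-(x * Real.exp (-u) / (x + u) ^ 2) - x * Real.exp (-u) / (x + u)) := by
      refine setIntegral_congr_fun measurableSet_Ioi (fun u hu => ?_)
      have h1 : (0:ℝ) < x + u := hxu u hu
      field_simp
      ring
    have := hcongr.symm.trans hsplit
    rw [hFTC'] at this
    linarith
  -- translation : ∫_{Ioi x} e^{-t}/t = e^{-x} * E
  have htrans : ∫ t in Ioi x, Real.exp (-t) / t = Real.exp (-x) * E := by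
    have himg : (fun u : ℝ => u + x) '' Ioi 0 = Ioi x := by
      ext t
      constructor
      · rintro ⟨u, hu, rfl⟩
        exact by simpa using by linarith [hu.out]
      · intro ht
        exact ⟨t - x, by simpa using by linarith [ht.out], by ring⟩
    have hd : ∀ u ∈ Ioi (0:ℝ),
        HasDerivWithinAt (fun u : ℝ => u + x) ((fun _ : ℝ => (1:ℝ)) u) (Ioi 0) u :=
      fun u _ => ((hasDerivAt_id u).add_const x).hasDerivWithinAt
    have hinj : InjOn (fun u : ℝ => u + x) (Ioi 0) :=
      fun a _ b _ h => by simpa using h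
    have := integral_image_eq_integral_abs_deriv_smul measurableSet_Ioi hd hinj
      (fun t => Real.exp (-t) / t)
    rw [himg] at this
    rw [this]
    rw [hEdef, ← integral_const_mul]
    refine setIntegral_congr_fun measurableSet_Ioi (fun u hu => ?_)
    have h1 : (0:ℝ) < x + u := hxu u hu
    rw [smul_eq_mul, abs_one, one_mul, show -(u + x) = -x + -u by ring, Real.exp_add,
      add_comm u x, mul_div_assoc]
  -- substitution u = r^2/σ^2
  have hsub : ∫ r in Set.Ioi (0 : ℝ),
      (A ^ 2 * r / (A ^ 2 + r ^ 2)) ^ 2 * (2 * r / σ ^ 2) * Real.exp (-r ^ 2 / σ ^ 2) =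
      (A ^ 4 / σ ^ 2) * ∫ u in Ioi (0:ℝ), u * Real.exp (-u) / (x + u) ^ 2 := by
    have himg : (fun r : ℝ => r ^ 2 / σ ^ 2) '' Ioi 0 = Ioi 0 := by
      ext u
      constructor
      · rintro ⟨r, hr, rfl⟩
        have : (0:ℝ) < r := hr
        exact by simpa using by positivity
      · intro hu
        have hu0 : (0:ℝ) < u := hu
        refine ⟨σ * Real.sqrt u, by simpa using by positivity, ?_⟩
        show (σ * Real.sqrt u) ^ 2 / σ ^ 2 = u
        rw [mul_pow, Real.sq_sqrt hu0.le]
        field_simp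
    have hd : ∀ r ∈ Ioi (0:ℝ),
        HasDerivWithinAt (fun r : ℝ => r ^ 2 / σ ^ 2) ((fun r => 2 * r / σ ^ 2) r) (Ioi 0) r := by
      intro r _
      have := (hasDerivAt_pow 2 r).div_const (σ ^ 2)
      simpa using this.hasDerivWithinAt
    have hinj : InjOn (fun r : ℝ => r ^ 2 / σ ^ 2) (Ioi 0) := by
      intro a ha b hb h
      have ha0 : (0:ℝ) < a := ha
      have hb0 : (0:ℝ) < b := hb
      simp only at h
      field_simp at h
      exact (pow_left_inj₀ ha0.le hb0.le two_ne_zero).mp h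
    have key := integral_image_eq_integral_abs_deriv_smul measurableSet_Ioi hd hinj
      (fun u => A ^ 4 / σ ^ 2 * (u * Real.exp (-u) / (x + u) ^ 2))
    rw [himg] at key
    rw [← integral_const_mul, key]
    refine setIntegral_congr_fun measurableSet_Ioi (fun r hr => ?_)
    have hr0 : (0:ℝ) < r := hr
    have hA2r : (0:ℝ) < A ^ 2 + r ^ 2 := by positivity
    rw [smul_eq_mul, abs_of_nonneg (by positivity)]
    rw [hxdef]
    rw [show x + r ^ 2 / σ ^ 2 = (A ^ 2 + r ^ 2) / σ ^ 2 by rw [hxdef]; ring]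
    rw [show (-(r ^ 2 / σ ^ 2)) = -r ^ 2 / σ ^ 2 by ring]
    field_simp
  rw [hsub, hkey, htrans]
  have hexp1 : Real.exp x * Real.exp (-x) = 1 := by
    rw [← Real.exp_add]; simp
  rw [show (1 + x) * Real.exp x * (Real.exp (-x) * E) - 1 =
      (1 + x) * (Real.exp x * Real.exp (-x)) * E - 1 by ring, hexp1]
  ring
end
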